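/- Let R be a valuation domain, S a maximal immediate extension of R (so S ≅ the pure-injective hull of R), and x ∈ S \ R with breadth ideal B(x) = A, where A is archimedean and A ≠ Pa for all a ∈ R. Let U be a pure uniserial submodule of S/R containing x + R. Then U^♯ = P; consequently U is isomorphic to an ideal of R. -/

import Mathlib

open Pointwise

section Defs
universe u v
variable (R : Type u) [CommRing R]

/-- `U` is a pure submodule of its ambient module: `rU = U ∩ rM` for all `r`. -/
def IsPureSub {M : Type v} [AddCommGroup M] [Module R M] (U : Submodule R M) : Prop :=
  ∀ (r : R) (x : M), x ∈ U → (∃ m : M, r • m = x) → ∃ u ∈ U, r • u = x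

/-- `U` is uniserial: its submodules are totally ordered by inclusion. -/
def IsUniserialSub {M : Type v} [AddCommGroup M] [Module R M] (U : Submodule R M) : Prop :=
  ∀ A B : Submodule R ↥U, A ≤ B ∨ B ≤ A

/-- `U` is a direct summand of its ambient module. -/
def IsSummand {M : Type v} [AddCommGroup M] [Module R M] (U : Submodule R M) : Prop :=
  ∃ V : Submodule R M, IsCompl U V

/-- A (torsion-free) module is separable if every pure uniserial submodule is a summand. -/
def IsSeparableMod (M : Type v) [AddCommGroup M] [Module R M] : Prop :=
  ∀ U : Submodule R M, IsPureSub R U → IsUniserialSub R U → IsSummand R U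

/-- `R/A` is complete in the `R/A`-topology: every coherent family of cosets
`(aᵢ + Bᵢ)` with `⋂ᵢ Bᵢ = A` has a common point. -/
def IsCompleteQuot (A : Ideal R) : Prop :=
  ∀ (ι : Type u) (a : ι → R) (B : ι → Ideal R),
    (∀ i, A ≤ B i) → (∀ i j, B i ≤ B j → a i - a j ∈ B j) → (⨅ i, B i) = A →
    ∃ c : R, ∀ i, c - a i ∈ B i

/-- A valuation ring with maximal ideal `P` is maximal: `R/A` is complete in the
`R/A`-topology for every proper ideal `A` with `A ≠ Pa` for all nonzero `a`. -/
def IsMaximalVD (P : Ideal R) : Prop :=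
  ∀ A : Ideal R, A ≠ ⊤ → (∀ a : R, a ≠ 0 → A ≠ Ideal.span {a} * P) → IsCompleteQuot R A

/-- A module `M` is slender if every homomorphism `R^ℕ → M` kills almost all
standard unit vectors. -/
def IsSlender (M : Type v) [AddCommGroup M] [Module R M] : Prop :=
  ∀ f : ((ℕ → R) →ₗ[R] M), ∃ n₀ : ℕ, ∀ n ≥ n₀, f (Pi.single n 1) = 0

end Defs

/-- Membership in a pointwise scalar multiple of a submodule. -/
theorem memSmulPt {R M : Type*} [CommRing R] [AddCommGroup M] [Module R M]
    (N : Submodule R M) (a : R) (m : M) : m ∈ a • N ↔ ∃ s ∈ N, a • s = m := by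
  show m ∈ N.map _ ↔ _
  rw [Submodule.mem_map]
  rfl


/-- let `S` be a maximal immediate extension of the valuation domain `R`
(immediate: no element of `S` has a best approximation in `R`; maximal: `S` is a maximal
valuation ring), `x ∈ S \ R` with breadth ideal `B(x) = A` archimedean, `A ≠ Pa` for all
`a`. If `U` is a pure uniserial submodule of `S/R` containing `x + R`, then `U^♯ = P`, and
consequently `U` is isomorphic to an ideal of `R`. -/
theorem stmt_15 {R S : Type u} [CommRing R] [IsDomain R] [ValuationRing R]
    [CommRing S] [IsDomain S] [ValuationRing S] [Algebra R S]
    (hinj : Function.Injective (algebraMap R S))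
    (himm : ∀ (s : S) (a : R), s - algebraMap R S a ≠ 0 →
      ∃ (b : R) (t : S), ¬ IsUnit t ∧ s - algebraMap R S b = (s - algebraMap R S a) * t)
    (hmax : IsMaximalVD S (IsLocalRing.maximalIdeal S))
    (P : Ideal R) (hP : P.IsMaximal)
    (x : S) (hx : x ∉ (algebraMap R S).range)
    (A : Ideal R)
    (hBx : ∀ r : R, r ∈ A ↔ ¬ ∃ (a : R) (t : S), x = algebraMap R S a + algebraMap R S r * t)
    (harch : ∀ s : R, s • A ≠ A ↔ s ∈ P)
    (hPa : ∀ a : R, A ≠ Ideal.span {a} * P)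
    (U : Submodule R (S ⧸ LinearMap.range (Algebra.linearMap R S)))
    (hxU : Submodule.Quotient.mk x ∈ U)
    (hpure : IsPureSub R U) (huni : IsUniserialSub R U) :
    (∀ s : R, s • U ≠ U ↔ s ∈ P) ∧ ∃ I : Ideal R, Nonempty (↥U ≃ₗ[R] ↥I) := by
  classical
  have hmemN : ∀ z : S, z ∈ LinearMap.range (Algebra.linearMap R S) ↔ ∃ a : R, algebraMap R S a = z := by
    intro z
    constructor
    · rintro ⟨a, ha⟩; exact ⟨a, ha⟩
    · rintro ⟨a, ha⟩; exact ⟨a, ha⟩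
  have hinj' : ∀ r : R, r ≠ 0 → (algebraMap R S) r ≠ 0 := by
    intro r hr h0
    exact hr (hinj (by rw [h0, map_zero]))
  -- S ∩ Q = R : if r * z ∈ R (image) with r ≠ 0 then z ∈ R (image)
  have hQR : ∀ z : S, (∃ r : R, r ≠ 0 ∧ ∃ w : R, algebraMap R S r * z = algebraMap R S w) →
      ∃ a : R, algebraMap R S a = z := by
    rintro z ⟨r, hr, w, hw⟩
    by_contra hz
    push_neg at hz
    obtain ⟨c, hc | hc⟩ := ValuationRing.cond r w
    · -- r * c = w, so z = c
      apply hz c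
      have h1 : algebraMap R S r * algebraMap R S c = algebraMap R S r * z := by
        rw [← map_mul, hc, hw]
      exact mul_left_cancel₀ (hinj' r hr) h1
    · -- w * c = r
      by_cases hw0 : w = 0
      · apply hz 0
        rw [map_zero]
        have h2 : algebraMap R S r * z = 0 := by rw [hw, hw0, map_zero]
        exact ((mul_eq_zero.mp h2).resolve_left (hinj' r hr)).symm
      · have hcz : algebraMap R S c * z = 1 := by
          have h1 : algebraMap R S w * (algebraMap R S c * z) = algebraMap R S w * 1 := by
            rw [mul_one, ← mul_assoc, ← map_mul, hc, hw]
          exact mul_left_cancel₀ (hinj' w hw0) h1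
        by_cases hcu : IsUnit c
        · obtain ⟨d, hd⟩ := hcu.exists_right_inv
          apply hz d
          calc algebraMap R S d = (algebraMap R S c * z) * algebraMap R S d := by
                rw [hcz, one_mul]
            _ = (algebraMap R S c * algebraMap R S d) * z := by ring
            _ = z := by rw [← map_mul, hd, map_one, one_mul]
        · have hz0 : z - algebraMap R S 0 ≠ 0 := by
            rw [map_zero, sub_zero]
            intro h0
            rw [h0, mul_zero] at hcz
            exact zero_ne_one hcz
          obtain ⟨b, t, htu, hbt⟩ := himm z 0 hz0
          rw [map_zero, sub_zero] at hbt
          have ht : t = algebraMap R S (1 - c * b) := by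
            have h2 : algebraMap R S c * (z - algebraMap R S b) = algebraMap R S c * (z * t) := by
              rw [hbt]
            rw [mul_sub, hcz, ← map_mul, ← mul_assoc, hcz, one_mul] at h2
            rw [map_sub, map_one, ← h2]
          rcases IsLocalRing.isUnit_or_isUnit_one_sub_self (c * b) with h3 | h3
          · exact hcu (isUnit_of_mul_isUnit_left h3)
          · exact htu (ht ▸ h3.map (algebraMap R S))
  -- torsion-freeness of S/R
  have htf : ∀ (r : R) (m : S ⧸ LinearMap.range (Algebra.linearMap R S)), r ≠ 0 → r • m = 0 → m = 0 := by
    intro r m hr hm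
    obtain ⟨z, rfl⟩ := Submodule.Quotient.mk_surjective _ m
    rw [← Submodule.Quotient.mk_smul, Submodule.Quotient.mk_eq_zero] at hm
    rw [Submodule.Quotient.mk_eq_zero]
    obtain ⟨w, hw⟩ := (hmemN _).mp hm
    refine (hmemN z).mpr (hQR z ⟨r, hr, w, ?_⟩)
    rw [← Algebra.smul_def]
    exact hw.symm
  have hone : (1:R) ∉ A := by
    intro h
    exact ((hBx 1).mp h) ⟨0, x, by rw [map_zero, map_one, zero_add, one_mul]⟩
  -- Step A: purity gives divisibility of x̄ inside U for r ∉ A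
  have hstepA : ∀ r : R, r ∉ A → ∃ u ∈ U, r • u = Submodule.Quotient.mk x := by
    intro r hr
    have hex : ∃ a t, x = algebraMap R S a + algebraMap R S r * t := by
      by_contra h
      exact hr ((hBx r).mpr h)
    obtain ⟨a, t, hat⟩ := hex
    apply hpure r (Submodule.Quotient.mk x) hxU
    refine ⟨Submodule.Quotient.mk t, ?_⟩
    rw [← Submodule.Quotient.mk_smul, Submodule.Quotient.eq]
    refine (hmemN _).mpr ⟨-a, ?_⟩
    rw [map_neg, Algebra.smul_def, hat]
    ring
  -- the hard direction
  have hhard : ∀ s : R, s ∈ P → s • U ≠ U := by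
    intro s hs hU
    have hB : ∀ r : R, r ∉ A → r * s ∉ A := by
      intro r hr hrs
      obtain ⟨u, hu, hru⟩ := hstepA r hr
      rw [← hU] at hu
      obtain ⟨w, hw, hsw⟩ := (memSmulPt U s u).mp hu
      obtain ⟨z, rfl⟩ := Submodule.Quotient.mk_surjective _ w
      have hmk : Submodule.Quotient.mk ((r * s) • z) =
          (Submodule.Quotient.mk x : S ⧸ LinearMap.range (Algebra.linearMap R S)) := by
        rw [Submodule.Quotient.mk_smul, ← smul_smul, hsw, hru]
      have hmem : (r * s) • z - x ∈ LinearMap.range (Algebra.linearMap R S) :=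
        (Submodule.Quotient.eq _).mp hmk
      obtain ⟨a, ha⟩ := (hmemN _).mp hmem
      rw [Algebra.smul_def] at ha
      refine ((hBx (r * s)).mp hrs) ⟨-a, z, ?_⟩
      rw [map_neg]
      linear_combination ha
    have hsnA : s ∉ A := by
      have := hB 1 hone
      rwa [one_mul] at this
    have hsA : s • A ≠ A := (harch s).mpr hs
    have hle : s • A ≤ A := by
      intro y hy
      obtain ⟨a, ha, rfl⟩ := (memSmulPt A s y).mp hy
      exact A.smul_mem s ha
    obtain ⟨a, haA, hanot⟩ : ∃ a ∈ A, a ∉ s • A := by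
      by_contra h
      push_neg at h
      exact hsA (le_antisymm hle h)
    obtain ⟨c, hc | hc⟩ := ValuationRing.cond a s
    · exact hsnA (hc ▸ Ideal.mul_mem_right c A haA)
    · by_cases hcA : c ∈ A
      · exact hanot ((memSmulPt A s a).mpr ⟨c, hcA, by rw [smul_eq_mul, hc]⟩)
      · exact (hB c hcA) (by rw [mul_comm, hc]; exact haA)
  have heasy : ∀ s : R, s ∉ P → s • U = U := by
    intro s hs
    have hsu : IsUnit s := by
      by_contra hu
      exact hs (IsLocalRing.eq_maximalIdeal hP ▸ hu)
    obtain ⟨d, hd⟩ := hsu.exists_right_inv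
    apply le_antisymm
    · intro y hy
      obtain ⟨u, hu, rfl⟩ := (memSmulPt U s y).mp hy
      exact U.smul_mem s hu
    · intro u hu
      exact (memSmulPt U s u).mpr ⟨d • u, U.smul_mem d hu, by rw [smul_smul, hd, one_smul]⟩
  have hfirst : ∀ s : R, s • U ≠ U ↔ s ∈ P := by
    intro s
    constructor
    · intro h
      by_contra hs
      exact h (heasy s hs)
    · exact hhard s
  refine ⟨hfirst, ?_⟩
  -- Part 2: construct an embedding U → R
  have hA0 : (0:R) ∈ A := A.zero_mem
  have hAbot : A ≠ ⊥ := by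
    intro h
    have h0 : (0:R) • A ≠ A := (harch 0).mpr P.zero_mem
    apply h0
    apply le_antisymm
    · intro y hy
      obtain ⟨a, ha, rfl⟩ := (memSmulPt A 0 y).mp hy
      rw [zero_smul]
      exact A.zero_mem
    · intro y hy
      rw [h, Submodule.mem_bot R] at hy
      subst hy
      exact (memSmulPt A 0 0).mpr ⟨0, A.zero_mem, by rw [smul_zero]⟩
  obtain ⟨s₀, hs₀A, hs₀ne⟩ : ∃ a ∈ A, a ≠ 0 := by
    by_contra h
    push_neg at h
    exact hAbot (le_antisymm (fun y hy => (Submodule.mem_bot R).mpr (h y hy)) bot_le)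
  have hs₀P : s₀ ∈ P := by
    by_contra h
    have hsu : IsUnit s₀ := by
      by_contra hu
      exact h (IsLocalRing.eq_maximalIdeal hP ▸ hu)
    exact hone (Ideal.eq_top_of_isUnit_mem A hs₀A hsu ▸ Submodule.mem_top)
  have hleU : s₀ • U ≤ U := by
    intro y hy
    obtain ⟨u, hu, rfl⟩ := (memSmulPt U s₀ y).mp hy
    exact U.smul_mem s₀ hu
  obtain ⟨u₁, hu₁U, hu₁⟩ : ∃ u ∈ U, u ∉ s₀ • U := by
    by_contra h
    push_neg at h
    exact hhard s₀ hs₀P (le_antisymm hleU h)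
  set e₁ : ↥U := ⟨u₁, hu₁U⟩ with he₁def
  have htfU : ∀ (r : R) (u : ↥U), r ≠ 0 → r • u = 0 → u = 0 := by
    intro r u hr h
    have hval : r • (u : S ⧸ LinearMap.range (Algebra.linearMap R S)) = 0 := by
      have := congrArg (Subtype.val) h
      simpa using this
    exact Subtype.ext (htf r u.1 hr hval)
  have he₁ : e₁ ≠ 0 := by
    intro h
    apply hu₁
    have : u₁ = 0 := congrArg Subtype.val h
    rw [this]
    exact (memSmulPt U s₀ 0).mpr ⟨0, U.zero_mem, by rw [smul_zero]⟩
  have hcancel : ∀ d : R, d • e₁ = 0 → d = 0 := by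
    intro d hd
    by_contra h
    exact he₁ (htfU d e₁ h hd)
  have hdiv : ∀ u : ↥U, ∃ w : R, s₀ • u = w • e₁ := by
    intro u
    rcases huni (Submodule.span R {u}) (Submodule.span R {e₁}) with h | h
    · obtain ⟨r, hr⟩ := Submodule.mem_span_singleton.mp (h (Submodule.mem_span_singleton_self u))
      exact ⟨s₀ * r, by rw [← hr, smul_smul]⟩
    · obtain ⟨r, hr⟩ := Submodule.mem_span_singleton.mp (h (Submodule.mem_span_singleton_self e₁))
      obtain ⟨c, hc | hc⟩ := ValuationRing.cond r s₀
      · refine ⟨c, ?_⟩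
        rw [← hr, smul_smul, mul_comm c r, hc]
      · exfalso
        apply hu₁
        have hval : s₀ • ((c • u : ↥U) : S ⧸ LinearMap.range (Algebra.linearMap R S)) = u₁ := by
          have h1 : e₁ = s₀ • (c • u) := by rw [smul_smul, hc, hr]
          have h2 := congrArg Subtype.val h1
          simpa using h2.symm
        exact (memSmulPt U s₀ u₁).mpr ⟨(c • u : ↥U), (c • u : ↥U).2, hval⟩
  choose h hspec using hdiv
  have huniq : ∀ (u : ↥U) (w : R), s₀ • u = w • e₁ → h u = w := by
    intro u w hw
    have : (h u - w) • e₁ = 0 := by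
      rw [show (h u - w) • e₁ = h u • e₁ - w • e₁ from by ext; simp [sub_smul], ← hspec u, hw, sub_self]
    exact sub_eq_zero.mp (hcancel _ this)
  let F : ↥U →ₗ[R] R :=
    { toFun := h
      map_add' := by
        intro u v
        exact huniq (u + v) (h u + h v) (by rw [smul_add, hspec u, hspec v, add_smul])
      map_smul' := by
        intro r u
        simp only [RingHom.id_apply, smul_eq_mul]
        exact huniq (r • u) (r * h u) (by rw [smul_comm, hspec u, smul_smul]) }
  have hFinj : Function.Injective F := by
    intro u v huv
    have h1 : s₀ • u = s₀ • v := by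
      rw [hspec u, hspec v]
      show (h u) • e₁ = (h v) • e₁
      rw [show h u = F u from rfl, show h v = F v from rfl, huv]
    have h2 : s₀ • (u - v) = 0 := by rw [smul_sub, h1, sub_self]
    have := htfU s₀ (u - v) hs₀ne h2
    exact sub_eq_zero.mp this
  exact ⟨LinearMap.range F, ⟨LinearEquiv.ofInjective F hFinj⟩⟩
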